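/- The doubled Schrödinger cocycle is strictly monotonic in energy: let C ∈ GL(m,ℂ), V₁, V₂ ∈ Her(m,ℂ), S = [[0,-C*],[C,0]], ψ(X,Y) = X*SY, and A_E(V) = [[C⁻¹(E·I - V), -C⁻¹C*],[I,0]]. Define B_E = A_E(V₂)·A_E(V₁). Then for every nonzero v ∈ ℂ^{2m}, ψ((d/dE) B_E · v, B_E · v) = -‖v₁‖² - ‖w₁‖² < 0, where v = (v₁, v₂)ᵀ and w = (w₁, w₂)ᵀ = A_E(V₁) v. -/

import Mathlib

open Matrix

/-- The transfer matrix `A_E(V) = [[C⁻¹(E·I - V), -C⁻¹C*],[I, 0]]`. -/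
noncomputable def transferMat {m : ℕ} (C V : Matrix (Fin m) (Fin m) ℂ) (E : ℝ) :
    Matrix (Fin m ⊕ Fin m) (Fin m ⊕ Fin m) ℂ :=
  Matrix.fromBlocks
    (C⁻¹ * ((E : ℂ) • (1 : Matrix (Fin m) (Fin m) ℂ) - V)) (-(C⁻¹ * Cᴴ)) 1 0

namespace Aux
variable {m : ℕ}

noncomputable def Dmat (C : Matrix (Fin m) (Fin m) ℂ) :
    Matrix (Fin m ⊕ Fin m) (Fin m ⊕ Fin m) ℂ :=
  Matrix.fromBlocks C⁻¹ 0 0 0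

lemma transferMat_eq (C V : Matrix (Fin m) (Fin m) ℂ) (E : ℝ) :
    transferMat C V E
      = Matrix.fromBlocks (-(C⁻¹*V)) (-(C⁻¹*Cᴴ)) 1 0 + (E:ℂ) • Dmat C := by
  have : C⁻¹ * ((E : ℂ) • (1 : Matrix (Fin m) (Fin m) ℂ) - V)
      = -(C⁻¹*V) + (E:ℂ) • C⁻¹ := by
    rw [mul_sub, Matrix.mul_smul, mul_one, sub_eq_neg_add]
  rw [transferMat, this]
  ext (i|i) (j|j) <;>
    simp [Dmat, Matrix.fromBlocks, Matrix.smul_apply, Matrix.add_apply]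

lemma hasDerivAt_transfer (C V : Matrix (Fin m) (Fin m) ℂ) (i j) (E₀ : ℝ) :
    HasDerivAt (fun E : ℝ => transferMat C V E i j) (Dmat C i j) E₀ := by
  have h := ((Complex.ofRealCLM.hasDerivAt (x := E₀)).mul_const (Dmat C i j)).const_add
    ((Matrix.fromBlocks (-(C⁻¹*V)) (-(C⁻¹*Cᴴ)) 1 0 : Matrix (Fin m ⊕ Fin m) (Fin m ⊕ Fin m) ℂ) i j)
  simp only [transferMat_eq, Matrix.add_apply, Matrix.smul_apply, smul_eq_mul] at h ⊢
  simpa using h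


lemma B'_eq (C V₁ V₂ : Matrix (Fin m) (Fin m) ℂ)
    (B : ℝ → Matrix (Fin m ⊕ Fin m) (Fin m ⊕ Fin m) ℂ)
    (hB : ∀ E : ℝ, B E = transferMat C V₂ E * transferMat C V₁ E)
    (E₀ : ℝ) (B' : Matrix (Fin m ⊕ Fin m) (Fin m ⊕ Fin m) ℂ)
    (hB' : ∀ i j, HasDerivAt (fun E : ℝ => B E i j) (B' i j) E₀) :
    B' = Dmat C * transferMat C V₁ E₀ + transferMat C V₂ E₀ * Dmat C := by
  ext i j
  refine (hB' i j).unique ?_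
  have h : ∀ E : ℝ, B E i j = ∑ k, transferMat C V₂ E i k * transferMat C V₁ E k j := by
    intro E; rw [hB E, Matrix.mul_apply]
  simp only [h]
  have := HasDerivAt.sum (u := (Finset.univ : Finset (Fin m ⊕ Fin m)))
    (fun k _ => (hasDerivAt_transfer C V₂ i k E₀).mul (hasDerivAt_transfer C V₁ k j E₀))
  convert this using 1
  all_goals simp [Matrix.add_apply, Matrix.mul_apply, Finset.sum_add_distrib, Finset.sum_fn, Pi.mul_def]

lemma key1 (C : Matrix (Fin m) (Fin m) ℂ) (hC : IsUnit C)
    (V : Matrix (Fin m) (Fin m) ℂ) (E : ℝ) :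
    (Dmat C)ᴴ * ((Matrix.fromBlocks 0 (-Cᴴ) C 0) * transferMat C V E)
      = -(Matrix.fromBlocks 1 0 0 0) := by
  have hd : IsUnit C.det := (Matrix.isUnit_iff_isUnit_det C).mp hC
  have h1 : C * C⁻¹ = 1 := Matrix.mul_nonsing_inv C hd
  have h3 : (C⁻¹)ᴴ * Cᴴ = 1 := by
    rw [← Matrix.conjTranspose_mul, h1, Matrix.conjTranspose_one]
  simp only [transferMat, Dmat, Matrix.fromBlocks_multiply, Matrix.fromBlocks_conjTranspose,
    Matrix.conjTranspose_zero]
  rw [Matrix.fromBlocks_neg]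
  congr 1 <;> simp [Matrix.mul_neg, ← mul_assoc, h3]

lemma key2 (C : Matrix (Fin m) (Fin m) ℂ) (hC : IsUnit C)
    (V : Matrix (Fin m) (Fin m) ℂ) (hV : Vᴴ = V) (E : ℝ) :
    (transferMat C V E)ᴴ * ((Matrix.fromBlocks 0 (-Cᴴ) C 0) * transferMat C V E)
      = Matrix.fromBlocks 0 (-Cᴴ) C 0 := by
  have hd : IsUnit C.det := (Matrix.isUnit_iff_isUnit_det C).mp hC
  have h1 : C * C⁻¹ = 1 := Matrix.mul_nonsing_inv C hd
  have h3 : (C⁻¹)ᴴ * Cᴴ = 1 := by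
    rw [← Matrix.conjTranspose_mul, h1, Matrix.conjTranspose_one]
  have hE : ((E:ℂ) • (1 : Matrix (Fin m) (Fin m) ℂ) - V)ᴴ = (E:ℂ) • 1 - V := by
    simp [Matrix.conjTranspose_sub, Matrix.conjTranspose_smul, hV, Complex.conj_ofReal]
  simp only [transferMat, Matrix.fromBlocks_multiply, Matrix.fromBlocks_conjTranspose,
    Matrix.conjTranspose_neg, Matrix.conjTranspose_mul, Matrix.conjTranspose_one,
    Matrix.conjTranspose_zero, hE]
  have h1' : ∀ X : Matrix (Fin m) (Fin m) ℂ, C * (C⁻¹ * X) = X := fun X => by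
    rw [← mul_assoc, h1, one_mul]
  congr 1 <;> simp [mul_assoc, Matrix.mul_neg, Matrix.neg_mul, h3, h1']


lemma dot_herm (M : Matrix (Fin m ⊕ Fin m) (Fin m ⊕ Fin m) ℂ)
    (v u : (Fin m ⊕ Fin m) → ℂ) :
    star v ⬝ᵥ (Mᴴ).mulVec u = star (M.mulVec v) ⬝ᵥ u := by
  rw [Matrix.star_mulVec, Matrix.dotProduct_mulVec]

lemma star_mul_self (z : ℂ) : star z * z = ((‖z‖ ^ 2 : ℝ) : ℂ) := by
  rw [Complex.star_def, mul_comm, Complex.mul_conj, Complex.normSq_eq_norm_sq]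

lemma dot_K (w : (Fin m ⊕ Fin m) → ℂ) :
    star w ⬝ᵥ (Matrix.fromBlocks 1 0 0 0 :
        Matrix (Fin m ⊕ Fin m) (Fin m ⊕ Fin m) ℂ).mulVec w
      = ((∑ i : Fin m, ‖w (Sum.inl i)‖ ^ 2 : ℝ) : ℂ) := by
  have h1 : ∀ i : Fin m, (Matrix.fromBlocks 1 0 0 0 :
      Matrix (Fin m ⊕ Fin m) (Fin m ⊕ Fin m) ℂ).mulVec w (Sum.inl i) = w (Sum.inl i) := by
    intro i
    simp [Matrix.mulVec, dotProduct, Fintype.sum_sum_type, Matrix.fromBlocks,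
      Matrix.one_apply]
  have h2 : ∀ i : Fin m, (Matrix.fromBlocks 1 0 0 0 :
      Matrix (Fin m ⊕ Fin m) (Fin m ⊕ Fin m) ℂ).mulVec w (Sum.inr i) = 0 := by
    intro i
    simp [Matrix.mulVec, dotProduct, Fintype.sum_sum_type, Matrix.fromBlocks]
  rw [dotProduct, Fintype.sum_sum_type]
  simp only [h1, h2, mul_zero, Finset.sum_const_zero, add_zero, Pi.star_apply]
  rw [Complex.ofReal_sum]
  exact Finset.sum_congr rfl fun i _ => star_mul_self _

end Aux


theorem stmt9 {m : ℕ} (C : Matrix (Fin m) (Fin m) ℂ) (hC : IsUnit C)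
    (V₁ V₂ : Matrix (Fin m) (Fin m) ℂ) (hV₁ : V₁ᴴ = V₁) (hV₂ : V₂ᴴ = V₂)
    (S : Matrix (Fin m ⊕ Fin m) (Fin m ⊕ Fin m) ℂ)
    (hS : S = Matrix.fromBlocks 0 (-Cᴴ) C 0)
    (B : ℝ → Matrix (Fin m ⊕ Fin m) (Fin m ⊕ Fin m) ℂ)
    (hB : ∀ E : ℝ, B E = transferMat C V₂ E * transferMat C V₁ E)
    (E₀ : ℝ) (B' : Matrix (Fin m ⊕ Fin m) (Fin m ⊕ Fin m) ℂ)
    (hB' : ∀ i j, HasDerivAt (fun E : ℝ => B E i j) (B' i j) E₀)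
    (v : (Fin m ⊕ Fin m) → ℂ) :
    star (B'.mulVec v) ⬝ᵥ S.mulVec ((B E₀).mulVec v) =
      -(((∑ i : Fin m, ‖v (Sum.inl i)‖ ^ 2) +
          ∑ i : Fin m, ‖(transferMat C V₁ E₀).mulVec v (Sum.inl i)‖ ^ 2 : ℝ) : ℂ) ∧
    (v ≠ 0 →
      0 < (∑ i : Fin m, ‖v (Sum.inl i)‖ ^ 2) +
        ∑ i : Fin m, ‖(transferMat C V₁ E₀).mulVec v (Sum.inl i)‖ ^ 2) := by
  subst hS
  set A₁ := transferMat C V₁ E₀ with hA₁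
  set A₂ := transferMat C V₂ E₀ with hA₂
  set Sm : Matrix (Fin m ⊕ Fin m) (Fin m ⊕ Fin m) ℂ := Matrix.fromBlocks 0 (-Cᴴ) C 0 with hSm
  set K : Matrix (Fin m ⊕ Fin m) (Fin m ⊕ Fin m) ℂ := Matrix.fromBlocks 1 0 0 0 with hK
  set w : (Fin m ⊕ Fin m) → ℂ := A₁.mulVec v with hw
  have hDeq := Aux.B'_eq C V₁ V₂ B hB E₀ B' hB'
  have k1₂ := Aux.key1 C hC V₂ E₀
  have k1₁ := Aux.key1 C hC V₁ E₀
  have k2 := Aux.key2 C hC V₂ hV₂ E₀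
  have e1 : (Aux.Dmat C)ᴴ * (Sm * (A₂ * A₁)) = -(K * A₁) := by
    rw [← Matrix.mul_assoc Sm, ← Matrix.mul_assoc, k1₂, Matrix.neg_mul]
  have e2 : A₂ᴴ * (Sm * (A₂ * A₁)) = Sm * A₁ := by
    rw [← Matrix.mul_assoc Sm, ← Matrix.mul_assoc, k2]
  have hM : B'ᴴ * (Sm * B E₀) = -(A₁ᴴ * (K * A₁)) + -K := by
    rw [hDeq, hB E₀, ← hA₁, ← hA₂, Matrix.conjTranspose_add, Matrix.conjTranspose_mul,
      Matrix.conjTranspose_mul, Matrix.add_mul, Matrix.mul_assoc (A₁ᴴ), e1,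
      Matrix.mul_assoc ((Aux.Dmat C)ᴴ), e2, k1₁, Matrix.mul_neg]
  have hdot2 : star v ⬝ᵥ (K.mulVec v) = ((∑ i : Fin m, ‖v (Sum.inl i)‖ ^ 2 : ℝ):ℂ) := by
    rw [hK, Aux.dot_K]
  have hdot1 : star v ⬝ᵥ ((A₁ᴴ * (K * A₁)).mulVec v)
      = ((∑ i : Fin m, ‖w (Sum.inl i)‖ ^ 2 : ℝ):ℂ) := by
    rw [← Matrix.mulVec_mulVec, Aux.dot_herm, ← Matrix.mulVec_mulVec, ← hw, hK, Aux.dot_K]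
  have hmain : star (B'.mulVec v) ⬝ᵥ Sm.mulVec ((B E₀).mulVec v) =
      -(((∑ i : Fin m, ‖v (Sum.inl i)‖ ^ 2) +
          ∑ i : Fin m, ‖w (Sum.inl i)‖ ^ 2 : ℝ) : ℂ) := by
    rw [Matrix.mulVec_mulVec, ← Aux.dot_herm, Matrix.mulVec_mulVec, hM,
      Matrix.add_mulVec, dotProduct_add, Matrix.neg_mulVec, Matrix.neg_mulVec,
      dotProduct_neg, dotProduct_neg, hdot1, hdot2]
    push_cast
    ring
  refine ⟨hmain, fun hv => ?_⟩
  have ha : (0:ℝ) ≤ ∑ i : Fin m, ‖v (Sum.inl i)‖ ^ 2 :=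
    Finset.sum_nonneg fun i _ => sq_nonneg _
  have hb : (0:ℝ) ≤ ∑ i : Fin m, ‖w (Sum.inl i)‖ ^ 2 :=
    Finset.sum_nonneg fun i _ => sq_nonneg _
  rcases (add_nonneg ha hb).lt_or_eq with hlt | heq
  · exact hlt
  exfalso
  have ha0 : ∑ i : Fin m, ‖v (Sum.inl i)‖ ^ 2 = 0 := by linarith
  have hb0 : ∑ i : Fin m, ‖w (Sum.inl i)‖ ^ 2 = 0 := by linarith
  have hvin : ∀ i : Fin m, v (Sum.inl i) = 0 := by
    intro i
    have := (Finset.sum_eq_zero_iff_of_nonneg (fun i _ => sq_nonneg _)).mp ha0 i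
      (Finset.mem_univ i)
    simpa [sq_eq_zero_iff] using this
  have hwin : ∀ i : Fin m, w (Sum.inl i) = 0 := by
    intro i
    have := (Finset.sum_eq_zero_iff_of_nonneg (fun i _ => sq_nonneg _)).mp hb0 i
      (Finset.mem_univ i)
    simpa [sq_eq_zero_iff] using this
  -- show the second block of v vanishes
  set y : Fin m → ℂ := fun i => v (Sum.inr i) with hy
  have hv' : v = Sum.elim (fun i => v (Sum.inl i)) y := by
    ext (i | i) <;> rfl
  have hx0 : (fun i => v (Sum.inl i)) = (0 : Fin m → ℂ) := funext hvin
  have hwy : ∀ i : Fin m, w (Sum.inl i) = (-(C⁻¹ * Cᴴ)).mulVec y i := by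
    intro i
    rw [hw, hA₁, transferMat, hv', Matrix.fromBlocks_mulVec, hx0]
    simp
  have hCy : (C⁻¹ * Cᴴ).mulVec y = 0 := by
    have : (-(C⁻¹ * Cᴴ)).mulVec y = 0 := funext fun i => (hwy i).symm.trans (hwin i)
    rw [Matrix.neg_mulVec, neg_eq_zero] at this
    exact this
  have hd : IsUnit C.det := (Matrix.isUnit_iff_isUnit_det C).mp hC
  have h1 : C * C⁻¹ = 1 := Matrix.mul_nonsing_inv C hd
  have hdH : IsUnit (Cᴴ).det := by
    rw [Matrix.det_conjTranspose]; exact hd.star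
  have hCH : (Cᴴ)⁻¹ * Cᴴ = 1 := Matrix.nonsing_inv_mul (Cᴴ) hdH
  have hCHy : Cᴴ.mulVec y = 0 := by
    have : Cᴴ.mulVec y = (C * (C⁻¹ * Cᴴ)).mulVec y := by
      rw [← Matrix.mul_assoc, h1, Matrix.one_mul]
    rw [this, ← Matrix.mulVec_mulVec, hCy, Matrix.mulVec_zero]
  have hy0 : y = 0 := by
    have : y = ((Cᴴ)⁻¹ * Cᴴ).mulVec y := by rw [hCH, Matrix.one_mulVec]
    rw [this, ← Matrix.mulVec_mulVec, hCHy, Matrix.mulVec_zero]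
  apply hv
  rw [hv', hx0, hy0]
  ext (i | i) <;> rfl
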